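/- arXiv:2004.05788 — 5 statements merged into one kernel-verified Lean document; each statement's English description precedes it below -/
import Mathlib

section
/- Fix b ≥ 0, ρ > 0 and u ∈ ℂ with u ≠ 0. Then the proximal map of the function z ↦ ½(|z| − b)² with parameter 1/ρ, i.e. the unique minimizer over z ∈ ℂ of ½(|z| − b)² + (ρ/2)|z − u|², is given by z* = ((b + ρ|u|)/(ρ + 1)) · (u/|u|). -/
theorem stmt3 (b ρ : ℝ) (hb : 0 ≤ b) (hρ : 0 < ρ) (u : ℂ) (hu : u ≠ 0)
    (zstar : ℂ)
    (hz : zstar = (((b + ρ * ‖u‖) / (ρ + 1) : ℝ) : ℂ) * (u / ((‖u‖ : ℝ) : ℂ))) :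
    ∀ z : ℂ, z ≠ zstar →
      (1 / 2) * (‖zstar‖ - b) ^ 2 + (ρ / 2) * (‖zstar - u‖) ^ 2
        < (1 / 2) * (‖z‖ - b) ^ 2 + (ρ / 2) * (‖z - u‖) ^ 2 := by
  intro z hzne
  set r := ‖u‖ with hr
  have hr0 : 0 < r := norm_pos_iff.mpr hu
  set c : ℝ := (b + ρ * r) / (ρ + 1) with hc
  have hρ1 : (0:ℝ) < ρ + 1 := by linarith
  have hc0 : 0 ≤ c := by
    apply div_nonneg _ hρ1.le
    nlinarith
  have hcc : c * (ρ + 1) = b + ρ * r := by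
    rw [hc]; field_simp
  have hzs : zstar = ((c / r : ℝ) : ℂ) * u := by
    rw [hz]; push_cast; field_simp
  have habs_zs : ‖zstar‖ = c := by
    rw [hzs, norm_mul, Complex.norm_real, Real.norm_eq_abs, abs_of_nonneg (by positivity), ← hr]
    field_simp
  have hrc : (r : ℂ) ≠ 0 := by exact_mod_cast hr0.ne'
  have hsub : ‖zstar - u‖ = |c - r| := by
    have h2 : zstar - u = (((c - r)/r : ℝ) : ℂ) * u := by
      rw [hzs]; push_cast; field_simp
    rw [h2, norm_mul, Complex.norm_real, Real.norm_eq_abs, ← hr, abs_div, abs_of_nonneg hr0.le]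
    field_simp
  set t := ‖z‖ with ht
  have ht0 : 0 ≤ t := norm_nonneg z
  rw [habs_zs, hsub, sq_abs]
  by_cases hzc : t = c
  · -- strict: (c - r)^2 < |z - u|^2
    have hre_le : (z * (starRingEnd ℂ) u).re ≤ c * r := by
      have h1 : (z * (starRingEnd ℂ) u).re ≤ ‖z * (starRingEnd ℂ) u‖ :=
        Complex.re_le_norm _
      have h2 : ‖z * (starRingEnd ℂ) u‖ = c * r := by
        rw [norm_mul, Complex.norm_conj, ← hr, ← ht, hzc]
      linarith
    have hre_lt : (z * (starRingEnd ℂ) u).re < c * r := by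
      rcases lt_or_eq_of_le hre_le with h | h
      · exact h
      · exfalso
        -- then z * conj u = c*r, hence z = zstar
        have h2 : ‖z * (starRingEnd ℂ) u‖ = c * r := by
          rw [norm_mul, Complex.norm_conj, ← hr, ← ht, hzc]
        have him : (z * (starRingEnd ℂ) u).im = 0 := by
          have hsq : (z * (starRingEnd ℂ) u).re ^ 2 + (z * (starRingEnd ℂ) u).im ^ 2
              = (c * r) ^ 2 := by
            have h3 := Complex.sq_norm (z * (starRingEnd ℂ) u)
            rw [h2, Complex.normSq_apply] at h3
            linear_combination -h3
          have him2 : (z * (starRingEnd ℂ) u).im ^ 2 = 0 := by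
            have hre2 : (z * (starRingEnd ℂ) u).re ^ 2 = (c * r) ^ 2 := by rw [h]
            linarith
          exact pow_eq_zero_iff (two_ne_zero) |>.mp him2
        have hw : z * (starRingEnd ℂ) u = ((c * r : ℝ) : ℂ) := by
          apply Complex.ext
          · simpa using h
          · simpa using him
        have hz2 : z = zstar := by
          have hcu : (starRingEnd ℂ) u * u = ((r ^ 2 : ℝ) : ℂ) := by
            rw [mul_comm, Complex.mul_conj, ← Complex.sq_norm, ← hr]
          have : z * ((starRingEnd ℂ) u * u) = ((c * r : ℝ) : ℂ) * u := by
            rw [← mul_assoc, hw]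
          rw [hcu] at this
          push_cast at this
          have h3 : z * (r : ℂ) = (c : ℂ) * u := by
            apply mul_right_cancel₀ hrc
            linear_combination this
          rw [hzs]
          push_cast
          field_simp
          exact h3
        exact hzne hz2
    have key : (c - r)^2 < (‖z - u‖)^2 := by
      rw [Complex.sq_norm, Complex.normSq_sub, ← Complex.sq_norm z, ← Complex.sq_norm u,
        ← hr, ← ht, hzc]
      nlinarith [hre_lt]
    nlinarith [key, hρ, hzc]
  · have h1 : (t - r)^2 ≤ (‖z - u‖)^2 := by
      have htr : |t - r| ≤ ‖z - u‖ := by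
        simpa [ht, hr] using abs_norm_sub_norm_le z u
      calc (t - r)^2 = |t - r|^2 := by rw [sq_abs]
        _ ≤ (‖z - u‖)^2 := by
            apply sq_le_sq' _ htr
            linarith [abs_nonneg (t - r)]
    have hne : (t - c) ≠ 0 := sub_ne_zero.mpr hzc
    have hpos : 0 < (t - c)^2 := by positivity
    nlinarith [h1, hpos, hρ, hcc]
end

section
/- Let H be a complex inner product space, P_X : H → H a linear idempotent map (P_X² = P_X), P_X^⊥ = id − P_X, R_X = 2P_X − id, and let P_Y : H → H be an arbitrary map with R_Y = 2P_Y − id. Fix β ∈ (1/2, 1). Suppose u ∈ H is a fixed point of the RAAR map, i.e. u = β(½ u + ½ R_X(R_Y u)) + (1−β) P_Y u. Then P_X u = P_X(P_Y u) and (1−β) P_X^⊥ u = (1−2β) P_X^⊥(P_Y u); equivalently P_Y u = P_X u − ((1−β)/(2β−1)) P_X^⊥ u. -/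
theorem stmt7 (H : Type*) [NormedAddCommGroup H] [InnerProductSpace ℂ H]
    (PX : H →ₗ[ℂ] H) (hPX : ∀ v, PX (PX v) = PX v)
    (PY : H → H) (β : ℝ) (hβ1 : 1 / 2 < β) (hβ2 : β < 1)
    (u : H)
    (hu : u = ((β : ℝ) : ℂ) • ((1 / 2 : ℂ) • u +
        (1 / 2 : ℂ) • ((2 : ℂ) • PX ((2 : ℂ) • PY u - u) - ((2 : ℂ) • PY u - u)))
      + (((1 - β : ℝ)) : ℂ) • PY u) :
    PX u = PX (PY u) ∧
    (((1 - β : ℝ) : ℂ)) • (u - PX u) = (((1 - 2 * β : ℝ) : ℂ)) • (PY u - PX (PY u)) ∧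
    PY u = PX u - ((((1 - β) / (2 * β - 1) : ℝ)) : ℂ) • (u - PX u) := by
  have hPXu := congrArg PX hu
  simp only [map_add, map_smul, map_sub, hPX] at hPXu
  simp only [map_smul, map_sub] at hu
  push_cast at hPXu hu ⊢
  have h1 : PX u = PX (PY u) := by
    linear_combination (norm := module) hPXu
  have h2 : ((1 - (β:ℂ))) • (u - PX u) = ((1 - 2 * (β:ℂ))) • (PY u - PX (PY u)) := by
    linear_combination (norm := module) hu - hPXu
  have hne : (2 * (β:ℂ) - 1) ≠ 0 := by
    intro h
    have : (2 * β - 1 : ℝ) = 0 := by exact_mod_cast congrArg Complex.re h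
    linarith
  refine ⟨h1, h2, ?_⟩
  rw [← h1] at h2
  linear_combination (norm := match_scalars <;> field_simp <;> ring) (2 * (β:ℂ) - 1)⁻¹ • h2
end

section
/- Let H be a complex Hilbert space, P_X an orthogonal projection on H, P_X^⊥ = I − P_X, and P_Y : H → H any map satisfying ‖P_Y v‖ ≤ c for all v (for some constant c ≥ 0). Fix β ∈ (1/2, 1) and suppose u satisfies P_X u = P_X P_Y u and (1−β) P_X^⊥ u = (1−2β) P_X^⊥ P_Y u. Then ‖u‖ ≤ max((2β−1)/(1−β), 1) · c. In particular, for β ∈ [1/2, 2/3], ‖u‖ ≤ c, while for β ∈ [2/3, 1), ‖u‖ ≤ ((2β−1)/(1−β)) c. -/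
theorem stmt8 (H : Type*) [NormedAddCommGroup H] [InnerProductSpace ℂ H]
    (PX : H →ₗ[ℂ] H)
    (hidem : ∀ v, PX (PX v) = PX v)
    (hsa : ∀ v w : H, (inner ℂ (PX v) w : ℂ) = inner ℂ v (PX w))
    (PY : H → H) (c : ℝ) (hc : 0 ≤ c) (hPY : ∀ v, ‖PY v‖ ≤ c)
    (β : ℝ) (hβ1 : 1 / 2 < β) (hβ2 : β < 1) (u : H)
    (h1 : PX u = PX (PY u))
    (h2 : (((1 - β : ℝ)) : ℂ) • (u - PX u) = (((1 - 2 * β : ℝ)) : ℂ) • (PY u - PX (PY u))) :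
    ‖u‖ ≤ max ((2 * β - 1) / (1 - β)) 1 * c ∧
    (β ≤ 2 / 3 → ‖u‖ ≤ c) ∧
    (2 / 3 ≤ β → ‖u‖ ≤ (2 * β - 1) / (1 - β) * c) := by
  have hβ' : (0:ℝ) < 1 - β := by linarith
  have hβ'' : (0:ℝ) < 2 * β - 1 := by linarith
  set w := PY u with hw
  -- Pythagorean decomposition for any a
  have horth : ∀ a : H, ‖a‖ ^ 2 = ‖PX a‖ ^ 2 + ‖a - PX a‖ ^ 2 := by
    intro a
    have hz : (inner ℂ (PX a) (a - PX a) : ℂ) = 0 := by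
      rw [inner_sub_right, hsa a a, hsa a (PX a), hidem, sub_self]
    have := norm_add_sq_eq_norm_sq_add_norm_sq_of_inner_eq_zero (PX a) (a - PX a) hz
    have he : PX a + (a - PX a) = a := by abel
    rw [he] at this
    nlinarith [this]
  -- norms from h2
  have hnorm2 : (1 - β) * ‖u - PX u‖ = (2 * β - 1) * ‖w - PX w‖ := by
    have := congrArg norm h2
    rw [norm_smul, norm_smul] at this
    simp only [Complex.norm_real, Real.norm_eq_abs] at this
    rw [abs_of_pos hβ', show |1 - 2 * β| = 2 * β - 1 by rw [abs_of_neg (by linarith)]; ring]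
      at this
    exact this
  set t : ℝ := (2 * β - 1) / (1 - β) with ht
  have htpos : 0 < t := div_pos hβ'' hβ'
  have hud : ‖u - PX u‖ = t * ‖w - PX w‖ := by
    rw [ht, div_mul_eq_mul_div, eq_div_iff hβ'.ne']
    linarith [hnorm2]
  set M : ℝ := max t 1 with hM
  have hM1 : (1:ℝ) ≤ M := le_max_right _ _
  have hMt : t ≤ M := le_max_left _ _
  have hwc : ‖w‖ ≤ c := hPY u
  have hu2 : ‖u‖ ^ 2 = ‖PX w‖ ^ 2 + t ^ 2 * ‖w - PX w‖ ^ 2 := by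
    rw [horth u, hud, h1]; ring
  have hw2 : ‖w‖ ^ 2 = ‖PX w‖ ^ 2 + ‖w - PX w‖ ^ 2 := horth w
  have hkey : ‖u‖ ≤ M * c := by
    have hMc : 0 ≤ M * c := mul_nonneg (by linarith) hc
    have hc2 : ‖w‖ ^ 2 ≤ c ^ 2 := pow_le_pow_left₀ (norm_nonneg w) hwc 2
    have hd2 : t ^ 2 * ‖w - PX w‖ ^ 2 ≤ M ^ 2 * ‖w - PX w‖ ^ 2 :=
      mul_le_mul_of_nonneg_right (pow_le_pow_left₀ htpos.le hMt 2) (sq_nonneg _)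
    have hp2 : ‖PX w‖ ^ 2 ≤ M ^ 2 * ‖PX w‖ ^ 2 := by
      nlinarith [mul_nonneg (mul_nonneg (sub_nonneg.2 hM1) (by linarith : (0:ℝ) ≤ M + 1)) (sq_nonneg ‖PX w‖)]
    have hsq : ‖u‖ ^ 2 ≤ (M * c) ^ 2 := by nlinarith [sq_nonneg M]
    nlinarith [norm_nonneg u, hsq, hMc]
  refine ⟨hkey, ?_, ?_⟩
  · intro hβ3
    have : t ≤ 1 := by
      rw [div_le_one hβ']; linarith
    have hM' : M = 1 := max_eq_right this
    calc ‖u‖ ≤ M * c := hkey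
      _ = c := by rw [hM', one_mul]
  · intro hβ3
    have : 1 ≤ t := by
      rw [le_div_iff₀ hβ']; linarith
    have hM' : M = t := max_eq_left this
    calc ‖u‖ ≤ M * c := hkey
      _ = t * c := by rw [hM']
end

section
/- Let A : ℂ^n → ℂ^N be a complex-linear isometry (A*A = I), let b ∈ ℝ^N have nonnegative entries, and define sgn(w) ∈ ℂ^N entrywise by sgn(w)_j = w_j/|w_j| if w_j ≠ 0 and sgn(w)_j = 1 otherwise. Suppose x ∈ ℂ^n is a fixed point of the alternating projections map, i.e. x = A*(b ⊙ sgn(Ax)), and suppose ‖Ax‖ = ‖b‖. Then |Ax| = b entrywise (i.e. |(Ax)_j| = b_j for every j). Moreover, for any fixed point x one always has ‖Ax‖ ≤ ‖b‖. -/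
/-- The sign of a complex number, with `sgn 0 = 1`. -/
noncomputable def csgn (w : ℂ) : ℂ := if w = 0 then 1 else w / (‖w‖ : ℂ)

lemma conj_mul_csgn (bj : ℝ) (w : ℂ) :
    (starRingEnd ℂ) w * ((bj : ℂ) * csgn w) = ((bj * ‖w‖ : ℝ) : ℂ) := by
  unfold csgn
  by_cases h : w = 0
  · simp [h]
  · have habs : (‖w‖ : ℂ) ≠ 0 := by
      simpa using h
    rw [if_neg h]
    field_simp
    rw [show (starRingEnd ℂ) w * (bj : ℂ) * w = (bj : ℂ) * (w * (starRingEnd ℂ) w) by ring,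
      Complex.mul_conj]
    push_cast [Complex.normSq_eq_norm_sq]
    ring

theorem stmt11 (n N : ℕ)
    (A : EuclideanSpace ℂ (Fin n) →L[ℂ] EuclideanSpace ℂ (Fin N))
    (hA : ∀ z, ‖A z‖ = ‖z‖)
    (b : EuclideanSpace ℝ (Fin N)) (hb : ∀ j, 0 ≤ b j)
    (x : EuclideanSpace ℂ (Fin n))
    (hfix : x = ContinuousLinearMap.adjoint A
      (WithLp.toLp 2 (fun j => (b j : ℂ) * csgn ((A x) j)) : EuclideanSpace ℂ (Fin N))) :
    (‖A x‖ = ‖b‖ → ∀ j, ‖(A x) j‖ = b j) ∧ ‖A x‖ ≤ ‖b‖ := by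
  set y := A x with hy
  set z : EuclideanSpace ℂ (Fin N) := WithLp.toLp 2 (fun j => (b j : ℂ) * csgn (y j)) with hz
  have h1 : (inner ℂ x x : ℂ) = inner ℂ y z := by
    nth_rewrite 2 [hfix]
    rw [ContinuousLinearMap.adjoint_inner_right]
  have h2 : (inner ℂ y z : ℂ) = ((∑ j, b j * ‖y j‖ : ℝ) : ℂ) := by
    rw [PiLp.inner_apply]
    push_cast
    refine Finset.sum_congr rfl fun j _ => ?_
    have := conj_mul_csgn (b j) (y j)
    push_cast at this
    simp only [hz, WithLp.ofLp_toLp, RCLike.inner_apply]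
    linear_combination this
  have h3 : (inner ℂ x x : ℂ) = ((‖x‖ ^ 2 : ℝ) : ℂ) := by
    rw [inner_self_eq_norm_sq_to_K]; norm_cast
  have hx : ‖x‖ = ‖y‖ := (hA x).symm
  have hsum : ∑ j, b j * ‖y j‖ = ‖y‖ ^ 2 := by
    have := h3.symm.trans (h1.trans h2)
    have := Complex.ofReal_inj.mp this
    rw [← this, hx]
  have hny : ‖y‖ ^ 2 = ∑ j, ‖y j‖ ^ 2 := by
    rw [EuclideanSpace.norm_eq, Real.sq_sqrt (Finset.sum_nonneg fun j _ => sq_nonneg _)]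
  have hnb : ‖b‖ ^ 2 = ∑ j, (b j) ^ 2 := by
    rw [EuclideanSpace.norm_eq, Real.sq_sqrt (Finset.sum_nonneg fun j _ => sq_nonneg _)]
    exact Finset.sum_congr rfl fun j _ => by
      rw [Real.norm_eq_abs, sq_abs]
  have hS : ∑ j, (‖y j‖ - b j) ^ 2 = ‖b‖ ^ 2 - ‖y‖ ^ 2 := by
    have expand : ∑ j, (‖y j‖ - b j) ^ 2
        = (∑ j, ‖y j‖ ^ 2) - 2 * (∑ j, b j * ‖y j‖)
          + ∑ j, (b j) ^ 2 := by
      rw [Finset.mul_sum, ← Finset.sum_sub_distrib, ← Finset.sum_add_distrib]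
      exact Finset.sum_congr rfl fun j _ => by ring
    rw [expand, ← hny, hsum, ← hnb]; ring
  have hSnn : 0 ≤ ∑ j, (‖y j‖ - b j) ^ 2 :=
    Finset.sum_nonneg fun j _ => sq_nonneg _
  have hle : ‖y‖ ≤ ‖b‖ := by nlinarith [norm_nonneg y, norm_nonneg b]
  refine ⟨fun heq j => ?_, hle⟩
  have hS0 : ∑ j, (‖y j‖ - b j) ^ 2 = 0 := by rw [hS, heq]; ring
  have := (Finset.sum_eq_zero_iff_of_nonneg fun j _ => sq_nonneg _).mp hS0 j
    (Finset.mem_univ j)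
  have h0 : ‖y j‖ - b j = 0 := by
    have := sq_nonneg (‖y j‖ - b j)
    nlinarith
  linarith
end

section
/- Let m be an even positive integer and f ∈ ℤ. Define the Fresnel mask μ : {1,…,m}² → ℂ by μ(k₁,k₂) = exp(iπ f (k₁² + k₂²)/m), its twin μ̌(k₁,k₂) = conj(μ(m+1−k₁, m+1−k₂)), and h = conj(μ̌) ⊙ μ, i.e. h(k₁,k₂) = μ(m+1−k₁, m+1−k₂) · μ(k₁,k₂). Then h satisfies the half-period symmetry h(k₁ + m/2, k₂) = σ · h(k₁,k₂) and h(k₁, k₂ + m/2) = σ · h(k₁,k₂) whenever both sides are defined, where σ = (−1)^{f(1 + m/2)}. Equivalently, writing h as a 2×2 block matrix (h₁ h₂; h₃ h₄) with blocks of size m/2, one has h₁ = h₄ = σ h₂ = σ h₃. -/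
theorem stmt18 (m : ℕ) (hm : Even m) (hm0 : 0 < m) (f : ℤ)
    (μ : ℤ → ℤ → ℂ)
    (hμ : ∀ a b : ℤ, μ a b =
      Complex.exp (Complex.I * Real.pi * f * ((a ^ 2 + b ^ 2 : ℤ) : ℂ) / m))
    (h : ℤ → ℤ → ℂ)
    (hh : ∀ k₁ k₂ : ℤ, h k₁ k₂ = μ (m + 1 - k₁) (m + 1 - k₂) * μ k₁ k₂)
    (σ : ℂ) (hσ : σ = (-1 : ℂ) ^ (f * (1 + (m : ℤ) / 2))) :
    (∀ k₁ k₂ : ℤ, 1 ≤ k₁ → k₁ + (m : ℤ) / 2 ≤ m → 1 ≤ k₂ → k₂ ≤ m →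
      h (k₁ + (m : ℤ) / 2) k₂ = σ * h k₁ k₂) ∧
    (∀ k₁ k₂ : ℤ, 1 ≤ k₁ → k₁ ≤ m → 1 ≤ k₂ → k₂ + (m : ℤ) / 2 ≤ m →
      h k₁ (k₂ + (m : ℤ) / 2) = σ * h k₁ k₂) := by
  set s : ℤ := (m : ℤ) / 2 with hs
  have hms : (m : ℤ) = 2 * s := by
    obtain ⟨t, ht⟩ := hm
    omega
  have hs0 : s ≠ 0 := by omega
  have hsC : (s : ℂ) ≠ 0 := by exact_mod_cast hs0
  have h2 : (m : ℂ) = 2 * (s : ℂ) := by exact_mod_cast hms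
  have hσ' : σ = Complex.exp (((f * (1 + s) : ℤ) : ℂ) * (Real.pi * Complex.I)) := by
    rw [hσ, Complex.exp_int_mul, Complex.exp_pi_mul_I]
  refine ⟨?_, ?_⟩
  · intro k₁ k₂ _ _ _ _
    rw [hh, hh, hμ, hμ, hμ, hμ, hσ', ← Complex.exp_add, ← Complex.exp_add,
      ← Complex.exp_add, Complex.exp_eq_exp_iff_exists_int]
    refine ⟨f * (k₁ - s - 1), ?_⟩
    push_cast
    rw [h2]
    field_simp
    ring
  · intro k₁ k₂ _ _ _ _
    rw [hh, hh, hμ, hμ, hμ, hμ, hσ', ← Complex.exp_add, ← Complex.exp_add,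
      ← Complex.exp_add, Complex.exp_eq_exp_iff_exists_int]
    refine ⟨f * (k₂ - s - 1), ?_⟩
    push_cast
    rw [h2]
    field_simp
    ring
end
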